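/- Let F be a linearly ordered field with integer part I and let α ∈ F with α ≥ 1. Then the following are equivalent: (a) DMO(α) holds, i.e. for all l, r ∈ F with 0 ≤ l < r < 1 there exists n ∈ I^{≥0} with l < nα − ⌊nα⌋ < r; (b) for all m ∈ I^{>0} and k ∈ I^{≥0}, the set N_{mα} ∩ (mI^{≥0} + k) contains a nonzero element. -/

import Mathlib

/-- `N_α`: the set `{⌊n·α⌋ : n ∈ I, n ≥ 0}`, where `fl` is the floor function
associated to the integer part `I` of `F`. -/
def Nset {F : Type*} [Field F] [LinearOrder F] [IsStrictOrderedRing F] (I : Subring F) (fl : F → F) (α : F) : Set F :=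
  {y | ∃ n, n ∈ I ∧ 0 ≤ n ∧ y = fl (n * α)}

/-- The arithmetic progression `m·I^{≥0} + k = {m·t + k : t ∈ I, t ≥ 0}`. -/
def AP {F : Type*} [Field F] [LinearOrder F] [IsStrictOrderedRing F] (I : Subring F) (m k : F) : Set F :=
  {y | ∃ t, t ∈ I ∧ 0 ≤ t ∧ y = m * t + k}

section Aux

variable {F : Type*} [Field F] [LinearOrder F] [IsStrictOrderedRing F] {I : Subring F} {fl : F → F}

lemma aux_step (hdisc : ∀ x ∈ I, ¬(0 < x ∧ x < 1)) {a : F} (ha : a ∈ I) (h : 0 < a) :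
    1 ≤ a := by
  by_contra h'
  exact hdisc a ha ⟨h, lt_of_not_ge h'⟩

lemma aux_nonneg (hdisc : ∀ x ∈ I, ¬(0 < x ∧ x < 1)) {a : F} (ha : a ∈ I) (h : -1 < a) :
    0 ≤ a := by
  by_contra h'
  push_neg at h'
  exact hdisc (-a) (neg_mem ha) ⟨by linarith, by linarith⟩

lemma aux_uniq (hdisc : ∀ x ∈ I, ¬(0 < x ∧ x < 1))
    (hfl : ∀ x : F, fl x ∈ I ∧ fl x ≤ x ∧ x < fl x + 1)
    {x a : F} (ha : a ∈ I) (h1 : a ≤ x) (h2 : x < a + 1) : fl x = a := by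
  obtain ⟨hmem, hle, hlt⟩ := hfl x
  rcases lt_trichotomy (fl x) a with h | h | h
  · have := aux_step hdisc (sub_mem ha hmem) (by linarith : (0:F) < a - fl x)
    linarith
  · exact h
  · have := aux_step hdisc (sub_mem hmem ha) (by linarith : (0:F) < fl x - a)
    linarith

end Aux

set_option maxHeartbeats 1000000 in
theorem stmt_16 {F : Type*} [Field F] [LinearOrder F] [IsStrictOrderedRing F] (I : Subring F) (fl : F → F)
    (hdisc : ∀ x ∈ I, ¬(0 < x ∧ x < 1))
    (hfl : ∀ x : F, fl x ∈ I ∧ fl x ≤ x ∧ x < fl x + 1)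
    (α : F) (hα : 1 ≤ α) :
    (∀ l r : F, 0 ≤ l → l < r → r < 1 →
        ∃ n, n ∈ I ∧ 0 ≤ n ∧ l < n * α - fl (n * α) ∧ n * α - fl (n * α) < r) ↔
    (∀ m ∈ I, 0 < m → ∀ k ∈ I, 0 ≤ k →
        ∃ y ∈ Nset I fl (m * α) ∩ AP I m k, y ≠ 0) := by
  constructor
  · -- DMO → AP statement
    intro hDMO m hmI hm k hkI hk
    obtain ⟨q, hqdef⟩ : ∃ q, q = fl (k / m) := ⟨_, rfl⟩
    obtain ⟨hqI, hqle, hqlt⟩ := hfl (k / m)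
    rw [← hqdef] at hqI hqle hqlt
    have hmq : m * q ≤ k := by
      have := (le_div_iff₀ hm).mp hqle; linarith
    have hmq' : k < m * (q + 1) := by
      have := (div_lt_iff₀ hm).mp hqlt; linarith
    have hq0 : 0 ≤ q := by
      refine aux_nonneg hdisc hqI ?_
      have : (0:F) ≤ k / m := div_nonneg hk hm.le
      linarith
    obtain ⟨r, hrdef⟩ : ∃ r, r = k - m * q := ⟨_, rfl⟩
    have hrI : r ∈ I := by rw [hrdef]; exact sub_mem hkI (mul_mem hmI hqI)
    have hr0 : 0 ≤ r := by rw [hrdef]; linarith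
    have hrm : r + 1 ≤ m := by
      have h1 : r < m := by rw [hrdef]; linarith
      have := aux_step hdisc (sub_mem hmI hrI) (by linarith : (0:F) < m - r)
      linarith
    obtain ⟨Q, hQdef⟩ : ∃ Q, Q = q + 1 := ⟨_, rfl⟩
    have hQI : Q ∈ I := by rw [hQdef]; exact add_mem hqI (one_mem I)
    have hQ1 : 1 ≤ Q := by rw [hQdef]; linarith
    have hmQ : 0 < m * Q := mul_pos hm (by linarith)
    obtain ⟨n₁, hn₁I, hn₁0, hlow, hhigh⟩ :=
      hDMO (r / (m * Q)) ((2 * r + 1) / (2 * (m * Q)))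
        (div_nonneg hr0 hmQ.le)
        (by rw [div_lt_div_iff₀ hmQ (by linarith)]; nlinarith)
        (by rw [div_lt_one (by linarith)]; nlinarith)
    obtain ⟨b₁, hb₁def⟩ : ∃ b₁, b₁ = fl (n₁ * α) := ⟨_, rfl⟩
    obtain ⟨hb₁I, hb₁le, hb₁lt⟩ := hfl (n₁ * α)
    rw [← hb₁def] at hb₁I hb₁le hb₁lt hlow hhigh
    have hf₁low : r < m * Q * (n₁ * α - b₁) := by
      have := (div_lt_iff₀ hmQ).mp hlow; linarith
    have hf₁high : m * Q * (n₁ * α - b₁) < r + 1 / 2 := by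
      have h2 := (lt_div_iff₀ (by linarith : (0:F) < 2 * (m * Q))).mp hhigh
      nlinarith
    have hn₁pos : 1 ≤ n₁ := by
      rcases eq_or_lt_of_le hn₁0 with h | h
      · exfalso
        have hz : n₁ * α = 0 := by rw [← h]; ring
        have hb0 : b₁ = 0 := by
          rw [hb₁def]
          exact aux_uniq hdisc hfl (zero_mem I) (by rw [hz]) (by rw [hz]; norm_num)
        have : (0:F) ≤ r / (m * Q) := div_nonneg hr0 hmQ.le
        rw [hz, hb0] at hlow
        simp at hlow
        linarith
      · exact aux_step hdisc hn₁I h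
    have hb₁pos : 1 ≤ b₁ := by
      refine aux_step hdisc hb₁I ?_
      have h1 : (1:F) ≤ n₁ * α := by nlinarith
      by_contra h'
      push_neg at h'
      linarith
    have hnI : Q * n₁ ∈ I := mul_mem hQI hn₁I
    have hn0 : (0:F) ≤ Q * n₁ := by nlinarith
    have hkey : (Q * n₁) * (m * α) = m * Q * b₁ + m * Q * (n₁ * α - b₁) := by ring
    have hflval : fl ((Q * n₁) * (m * α)) = m * Q * b₁ + r := by
      refine aux_uniq hdisc hfl (add_mem (mul_mem (mul_mem hmI hQI) hb₁I) hrI) ?_ ?_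
      · rw [hkey]; linarith
      · rw [hkey]; linarith
    have hQb : Q ≤ Q * b₁ := by nlinarith
    refine ⟨m * Q * b₁ + r,
      ⟨⟨Q * n₁, hnI, hn0, hflval.symm⟩,
       ⟨Q * b₁ - q, sub_mem (mul_mem hQI hb₁I) hqI, by linarith,
        by rw [hrdef]; ring⟩⟩, ?_⟩
    have : 0 < m * Q * b₁ + r := by nlinarith
    exact ne_of_gt this
  · -- AP statement → DMO
    intro hAP l r hl hlr hr1
    have hrl : (0:F) < r - l := by linarith
    obtain ⟨m, hmdef⟩ : ∃ m, m = fl (2 / (r - l)) + 1 := ⟨_, rfl⟩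
    obtain ⟨hmI', hmle', hmlt'⟩ := hfl (2 / (r - l))
    have hmI : m ∈ I := by rw [hmdef]; exact add_mem hmI' (one_mem I)
    have hmlt : 2 / (r - l) < m := by rw [hmdef]; linarith
    have h2m : 2 < m * (r - l) := by
      have := (div_lt_iff₀ hrl).mp hmlt
      linarith
    have hm0 : (0:F) < m := by
      have : (0:F) < 2 / (r - l) := by positivity
      linarith
    obtain ⟨k, hkdef⟩ : ∃ k, k = fl (m * l) + 1 := ⟨_, rfl⟩
    obtain ⟨hkI', hkle', hklt'⟩ := hfl (m * l)
    have hkI : k ∈ I := by rw [hkdef]; exact add_mem hkI' (one_mem I)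
    have hkml : m * l < k := by rw [hkdef]; linarith
    have hkml' : k ≤ m * l + 1 := by rw [hkdef]; linarith
    have hk0 : (0:F) ≤ k := by
      have h1 : (0:F) ≤ m * l := mul_nonneg hm0.le hl
      linarith
    have hkmr : k + 1 < m * r := by linarith [h2m, hkml']
    obtain ⟨y, ⟨⟨n, hnI, hn0, hy1⟩, ⟨t, htI, ht0, hy2⟩⟩, hy0⟩ := hAP m hmI hm0 k hkI hk0
    obtain ⟨hyI, hyle, hylt⟩ := hfl (n * (m * α))
    rw [← hy1] at hyle hylt
    have he0 : 0 ≤ n * (m * α) - y := by linarith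
    have he1 : n * (m * α) - y < 1 := by linarith
    have hprod : n * (m * α) = m * t + k + (n * (m * α) - y) := by rw [hy2]; ring
    have hnα : n * α = t + (k + (n * (m * α) - y)) / m := by
      have h3 : m * (n * α) = m * (t + (k + (n * (m * α) - y)) / m) := by
        rw [mul_add, mul_div_cancel₀ _ (ne_of_gt hm0)]
        linear_combination hprod
      exact mul_left_cancel₀ (ne_of_gt hm0) h3
    have hke0 : 0 ≤ (k + (n * (m * α) - y)) / m := div_nonneg (by linarith) hm0.le
    have hkem : (k + (n * (m * α) - y)) / m < 1 := by
      rw [div_lt_one hm0]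
      have := mul_lt_of_lt_one_right hm0 hr1
      linarith
    have hflt : fl (n * α) = t := by
      refine aux_uniq hdisc hfl htI ?_ ?_ <;> rw [hnα] <;> linarith
    refine ⟨n, hnI, hn0, ?_, ?_⟩ <;> rw [hflt, hnα]
    · have : l < (k + (n * (m * α) - y)) / m := by
        rw [lt_div_iff₀ hm0]; linarith
      linarith
    · have : (k + (n * (m * α) - y)) / m < r := by
        rw [div_lt_iff₀ hm0]; linarith
      linarith
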